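/- In a signed graph Γ, the edge sets all of whose connected components are trees or unicyclic graphs whose unique cycle is unbalanced form the independent sets of a matroid M(Γ) on the edge set of Γ. Moreover, every basis of M(Γ) has at most |V(Γ)| elements. -/

import Mathlib

open Finset

/-- The ground set `E_{±n} = [n] ∪ [n]*`, where `(i, false)` denotes `i`
and `(i, true)` denotes `i*`. -/
abbrev EE (n : ℕ) := Fin n × Bool

/-- The involution `* : E_{±n} → E_{±n}`. -/
def estar {n : ℕ} (x : EE n) : EE n := (x.1, !x.2)

/-- `S* = {x* : x ∈ S}`. -/
def starSet {n : ℕ} (S : Finset (EE n)) : Finset (EE n) := S.image estar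

/-- A set is admissible if `S ∩ S* = ∅`. -/
def Admissible {n : ℕ} (S : Finset (EE n)) : Prop := Disjoint S (starSet S)

/-- An admissible ordering of `E_{±n}`, encoded by an injective rank function `w`
such that `x < y` implies `y* < x*`. -/
structure AdmOrdering (n : ℕ) where
  w : EE n → ℕ
  inj : Function.Injective w
  rev : ∀ x y, w x < w y → w (estar y) < w (estar x)

/-- The induced (componentwise) partial order on subsets:
compare the sorted lists of ranks entrywise. -/
def setLE {n : ℕ} (o : AdmOrdering n) (A B : Finset (EE n)) : Prop :=
  List.Forall₂ (· ≤ ·) (Finset.sort (A.image o.w) (· ≤ ·)) (Finset.sort (B.image o.w) (· ≤ ·))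

/-- The Maximality Property: for every admissible ordering, the family has a
unique maximal member in the induced partial order. -/
def HasUniqueMaximal {n : ℕ} (𝓑 : Set (Finset (EE n))) : Prop :=
  ∀ o : AdmOrdering n, ∃! M, M ∈ 𝓑 ∧ ∀ S ∈ 𝓑, setLE o M S → M = S

/-- A symplectic matroid: a nonempty family of equinumerous admissible subsets of
`E_{±n}` with a unique maximal member under every admissible ordering. -/
def IsSymplecticMatroid {n : ℕ} (𝓑 : Set (Finset (EE n))) : Prop :=
  𝓑.Nonempty ∧ (∀ S ∈ 𝓑, Admissible S) ∧ (∀ S ∈ 𝓑, ∀ T ∈ 𝓑, S.card = T.card) ∧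
    HasUniqueMaximal 𝓑

/-- The circuits of a family of bases: minimal admissible subsets of `E_{±n}`
contained in no member of `𝓑`. -/
def Circuits {n : ℕ} (𝓑 : Set (Finset (EE n))) : Set (Finset (EE n)) :=
  {C | Admissible C ∧ (∀ B ∈ 𝓑, ¬ C ⊆ B) ∧
    ∀ D ⊂ C, Admissible D → ∃ B ∈ 𝓑, D ⊆ B}

/-- The bases determined by a circuit family: maximal admissible subsets of
`E_{±n}` containing no member of `𝓒`. -/
def BasesOf {n : ℕ} (𝓒 : Set (Finset (EE n))) : Set (Finset (EE n)) :=
  {B | Admissible B ∧ (∀ C ∈ 𝓒, ¬ C ⊆ B) ∧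
    ∀ D, B ⊂ D → Admissible D → ∃ C ∈ 𝓒, C ⊆ D}

/-- `P` spans `x` if some `J ∈ 𝓒` has `J − P = {x}`. -/
def Spans {n : ℕ} (𝓒 : Set (Finset (EE n))) (P : Finset (EE n)) (x : EE n) : Prop :=
  ∃ J ∈ 𝓒, J \ P = {x}

/-- Axiom (SC1). -/
def SC1 {n : ℕ} (𝓒 : Set (Finset (EE n))) : Prop := ∅ ∉ 𝓒

/-- Axiom (SC2). -/
def SC2 {n : ℕ} (𝓒 : Set (Finset (EE n))) : Prop :=
  ∀ C₁ ∈ 𝓒, ∀ C₂ ∈ 𝓒, C₁ ⊆ C₂ → C₁ = C₂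

/-- Axiom (SC3): circuit elimination when the union is admissible. -/
def SC3 {n : ℕ} (𝓒 : Set (Finset (EE n))) : Prop :=
  ∀ C₁ ∈ 𝓒, ∀ C₂ ∈ 𝓒, C₁ ≠ C₂ → Admissible (C₁ ∪ C₂) →
    ∀ x ∈ C₁ ∩ C₂, ∃ C ∈ 𝓒, C ⊆ (C₁ ∪ C₂) \ {x}

/-- Axiom (SC4): no small admissible set spans all of `E_{±n} − (P ∪ P*)`. -/
def SC4 {n : ℕ} (𝓒 : Set (Finset (EE n))) : Prop :=
  ∀ P : Finset (EE n), Admissible P → ∀ B ∈ BasesOf 𝓒, P.card < B.card →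
    ∃ x, x ∉ P ∪ starSet P ∧ ¬ Spans 𝓒 P x

/-- A finite undirected multigraph: each edge has a pair (possibly equal) of endpoints. -/
structure Multigraph (V : Type) (Edge : Type) where
  ends : Edge → Sym2 V

/-- `F` is the edge set of a (single) cycle in `G`: there are distinct edges
`e 0, …, e (m-1)` and distinct vertices `v 0, …, v (m-1)` with `e i` joining
`v i` to `v (i+1)`. -/
def IsCycleSet {V Edge : Type} [DecidableEq Edge] (G : Multigraph V Edge)
    (F : Finset Edge) : Prop :=
  ∃ (m : ℕ) (hm : 0 < m) (e : Fin m → Edge) (v : Fin m → V),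
    Function.Injective e ∧ Function.Injective v ∧
    Finset.univ.image e = F ∧
    ∀ i : Fin m, G.ends (e i) = s(v i, v ⟨(i.val + 1) % m, Nat.mod_lt _ hm⟩)

/-- A cycle is balanced if it has an even number of negative edges
(`sgn e = true` meaning `e` is negative). -/
def BalancedCycle {Edge : Type} [DecidableEq Edge] (sgn : Edge → Bool)
    (F : Finset Edge) : Prop :=
  Even (F.filter (fun e => sgn e)).card

/-- Two edges are linked in `F` if they are joined by a chain of edges of `F`
consecutively sharing a vertex. -/
def Linked {V Edge : Type} (G : Multigraph V Edge) (F : Finset Edge) (e f : Edge) : Prop :=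
  Relation.ReflTransGen (fun a b => a ∈ F ∧ b ∈ F ∧ ∃ x, x ∈ G.ends a ∧ x ∈ G.ends b) e f

open scoped Classical in
/-- The connected component (as an edge set) of `e` in the edge set `F`. -/
noncomputable def Component {V Edge : Type} [DecidableEq Edge] (G : Multigraph V Edge)
    (F : Finset Edge) (e : Edge) : Finset Edge :=
  F.filter (fun f => Linked G F e f)

/-- `F` is independent in the signed graph `(G, sgn)`: every connected component
is either a tree (contains no cycle) or a unicyclic graph whose unique cycle is
unbalanced. -/
def SgnIndep {V Edge : Type} [DecidableEq Edge] (G : Multigraph V Edge)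
    (sgn : Edge → Bool) (F : Finset Edge) : Prop :=
  ∀ e ∈ F,
    (∀ C ⊆ Component G F e, ¬ IsCycleSet G C) ∨
    ((∃! C, C ⊆ Component G F e ∧ IsCycleSet G C) ∧
      ∀ C ⊆ Component G F e, IsCycleSet G C → ¬ BalancedCycle sgn C)

noncomputable section SGH
open scoped Classical
set_option linter.unusedSectionVars false

variable {V Edge : Type} [Fintype V] [Fintype Edge] [DecidableEq Edge]

variable (G : Multigraph V Edge) (sgn : Edge → Bool)

private lemma exists_pair (e : Edge) : ∃ p : V × V, G.ends e = s(p.1, p.2) := by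
  induction (G.ends e) using Sym2.ind with
  | _ a b => exact ⟨(a, b), rfl⟩

def pe (e : Edge) : V × V := Classical.choose (exists_pair G e)

lemma ends_eq (e : Edge) : G.ends e = s((pe G e).1, (pe G e).2) :=
  Classical.choose_spec (exists_pair G e)

lemma mem_ends_iff {w : V} {e : Edge} : w ∈ G.ends e ↔ w = (pe G e).1 ∨ w = (pe G e).2 := by
  rw [ends_eq G e, Sym2.mem_iff]

/-- sign as a rational: `1` for negative edges (`sgn = true`), `-1` for positive. -/
def sg (e : Edge) : ℚ := if sgn e then 1 else -1

lemma sg_mul_self (e : Edge) : sg sgn e * sg sgn e = 1 := by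
  unfold sg; split <;> norm_num

lemma sg_ne_zero (e : Edge) : sg sgn e ≠ 0 := by
  unfold sg; split <;> norm_num

/-- the column of an edge in the signed incidence matrix over `ℚ`. -/
def col (e : Edge) : V → ℚ :=
  (Pi.single (pe G e).1 1 : V → ℚ) + sg sgn e • (Pi.single (pe G e).2 1 : V → ℚ)

/-- the column of an edge in the unsigned incidence matrix over `𝔽₂`. -/
def ucol (e : Edge) : V → ZMod 2 :=
  (Pi.single (pe G e).1 1 : V → ZMod 2) + (Pi.single (pe G e).2 1 : V → ZMod 2)

lemma ucol_eq_of {e : Edge} {a b : V} (h : G.ends e = s(a, b)) :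
    ucol G e = (Pi.single a 1 : V → ZMod 2) + (Pi.single b 1 : V → ZMod 2) := by
  have h2 := (ends_eq G e).symm.trans h
  rw [Sym2.eq_iff] at h2
  unfold ucol
  rcases h2 with ⟨h1, h2⟩ | ⟨h1, h2⟩ <;> rw [h1, h2]
  exact add_comm _ _

lemma exists_unit_col {e : Edge} {a b : V} (h : G.ends e = s(a, b)) :
    ∃ u : ℚ, u * u = 1 ∧
      u • col G sgn e = (Pi.single a 1 : V → ℚ) + sg sgn e • (Pi.single b 1 : V → ℚ) := by
  have h2 := (ends_eq G e).symm.trans h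
  rw [Sym2.eq_iff] at h2
  unfold col
  rcases h2 with ⟨h1, h2⟩ | ⟨h1, h2⟩
  · exact ⟨1, by norm_num, by rw [h1, h2, one_smul]⟩
  · refine ⟨sg sgn e, sg_mul_self sgn e, ?_⟩
    rw [h1, h2, smul_add, smul_smul, sg_mul_self, one_smul]
    exact add_comm _ _

lemma col_apply_ne {e : Edge} {w : V} (h : col G sgn e w ≠ 0) : w ∈ G.ends e := by
  rw [mem_ends_iff]
  by_contra hc
  push_neg at hc
  apply h
  simp only [col, Pi.add_apply, Pi.smul_apply, Pi.single_apply, if_neg hc.1, if_neg hc.2,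
    smul_zero, add_zero]

lemma ucol_apply_ne {e : Edge} {w : V} (h : ucol G e w ≠ 0) : w ∈ G.ends e := by
  rw [mem_ends_iff]
  by_contra hc
  push_neg at hc
  apply h
  simp only [ucol, Pi.add_apply, Pi.single_apply, if_neg hc.1, if_neg hc.2, add_zero]

lemma col_apply_of_mem {e : Edge} {w : V} (hw : w ∈ G.ends e)
    (h : sgn e = true ∨ (pe G e).1 ≠ (pe G e).2) : col G sgn e w ≠ 0 := by
  rw [mem_ends_iff] at hw
  have hsg : sg sgn e = 1 ∨ sg sgn e = -1 := by unfold sg; split <;> simp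
  by_cases hl : (pe G e).1 = (pe G e).2
  · have hsgn : sgn e = true := h.resolve_right (fun hc => hc hl)
    have hs1 : sg sgn e = 1 := by unfold sg; rw [hsgn]; simp
    have hw1 : w = (pe G e).1 := by
      rcases hw with h' | h'
      · exact h'
      · exact h'.trans hl.symm
    simp only [col, hs1, one_smul, Pi.add_apply, hw1, ← hl, Pi.single_apply, if_pos rfl]
    norm_num
  · rcases hw with h' | h'
    · simp only [col, Pi.add_apply, Pi.smul_apply, Pi.single_apply, h']
      rw [if_pos trivial, if_neg hl]
      simp
    · simp only [col, Pi.add_apply, Pi.smul_apply, Pi.single_apply, h']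
      rw [if_neg (fun hc => hl hc.symm), if_pos trivial]
      rcases hsg with h2 | h2 <;> rw [h2] <;> norm_num

lemma ucol_apply_of_mem {e : Edge} {w : V} (hw : w ∈ G.ends e)
    (h : (pe G e).1 ≠ (pe G e).2) : ucol G e w = 1 := by
  rw [mem_ends_iff] at hw
  rcases hw with h' | h' <;>
    simp only [ucol, Pi.add_apply, Pi.single_apply, h']
  · rw [if_pos trivial, if_neg h, add_zero]
  · rw [if_neg (fun hc => h hc.symm), if_pos trivial, zero_add]


lemma rot_val {n : ℕ} (i : Fin (n+1)) :
    ((finRotate (n+1)) i).val = (i.val + 1) % (n+1) := by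
  rw [finRotate_succ_apply, Fin.add_def]
  simp [Nat.add_mod]

lemma rot_eq_mk {n : ℕ} (i : Fin (n+1)) :
    (finRotate (n+1)) i = ⟨(i.val + 1) % (n+1), Nat.mod_lt _ (Nat.succ_pos n)⟩ := by
  apply Fin.ext; exact rot_val i

lemma rot_apply_of_lt {n : ℕ} {j : ℕ} (h : j + 1 < n + 1) :
    (finRotate (n+1)) ⟨j, Nat.lt_of_succ_lt h⟩ = ⟨j + 1, h⟩ := by
  apply Fin.ext; rw [rot_val]; exact Nat.mod_eq_of_lt h

lemma rot_last {n : ℕ} : (finRotate (n+1)) ⟨n, Nat.lt_succ_self n⟩ = ⟨0, Nat.succ_pos n⟩ := by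
  apply Fin.ext; rw [rot_val]; simp

lemma cycle_nonempty {C : Finset Edge} (hC : IsCycleSet G C) : C.Nonempty := by
  obtain ⟨m, hm, e, v, _, _, him, _⟩ := hC
  exact him ▸ ⟨e ⟨0, hm⟩, Finset.mem_image_of_mem e (Finset.mem_univ _)⟩

lemma loop_cycle {p : Edge} {a : V} (h : G.ends p = s(a, a)) : IsCycleSet G {p} := by
  refine ⟨1, Nat.one_pos, fun _ => p, fun _ => a, fun x y _ => Subsingleton.elim x y,
    fun x y _ => Subsingleton.elim x y, ?_, fun i => h⟩
  simp

/-- the sum of the unsigned columns over a cycle vanishes over `𝔽₂`. -/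
lemma ucol_cycle_sum {C : Finset Edge} (hC : IsCycleSet G C) :
    ∑ f ∈ C, ucol G f = 0 := by
  obtain ⟨m, hm, e, v, he, hv, him, hends⟩ := hC
  obtain ⟨n, rfl⟩ : ∃ n, m = n + 1 := ⟨m - 1, (Nat.succ_pred_eq_of_pos hm).symm⟩
  rw [← him, Finset.sum_image (fun x _ y _ h => he h)]
  have : ∀ i : Fin (n+1), ucol G (e i) =
      (Pi.single (v i) 1 : V → ZMod 2) + Pi.single (v ((finRotate (n+1)) i)) 1 := by
    intro i
    rw [ucol_eq_of G (hends i)]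
    congr 2
    rw [rot_eq_mk]
  rw [Finset.sum_congr rfl (fun i _ => this i), Finset.sum_add_distrib]
  have h2 : ∑ i : Fin (n+1), (Pi.single (v ((finRotate (n+1)) i)) 1 : V → ZMod 2)
      = ∑ i : Fin (n+1), (Pi.single (v i) 1 : V → ZMod 2) :=
    Equiv.sum_comp (finRotate (n+1)) (fun k => (Pi.single (v k) 1 : V → ZMod 2))
  rw [h2]
  funext w
  simp only [Pi.add_apply, Pi.zero_apply, Finset.sum_apply]
  have : ∀ a : ZMod 2, a + a = 0 := by decide
  exact this _



section CycleComp

variable {n : ℕ}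

private lemma cycle_eval {e : Fin (n+1) → Edge} {v : Fin (n+1) → V}
    (hv : Function.Injective v) (u : Fin (n+1) → ℚ)
    (hu : ∀ i, u i • col G sgn (e i) =
      (Pi.single (v i) 1 : V → ℚ) + sg sgn (e i) • (Pi.single (v ((finRotate (n+1)) i)) 1 : V → ℚ))
    (h : Fin (n+1) → ℚ) (k : Fin (n+1)) :
    (∑ j : Fin (n+1), (h j * u j) • col G sgn (e j)) (v k)
      = h k + h ((finRotate (n+1)).symm k) * sg sgn (e ((finRotate (n+1)).symm k)) := by
  have step : ∀ j : Fin (n+1), ((h j * u j) • col G sgn (e j)) (v k)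
      = (if k = j then h j else 0)
        + (if (finRotate (n+1)).symm k = j then h j * sg sgn (e j) else 0) := by
    intro j
    have h1 : (h j * u j) • col G sgn (e j) = h j • (u j • col G sgn (e j)) := by
      rw [smul_smul]
    rw [h1, hu j]
    simp only [Pi.smul_apply, Pi.add_apply, Pi.single_apply, smul_eq_mul, hv.eq_iff,
      Equiv.symm_apply_eq]
    split_ifs <;> ring
  rw [Finset.sum_apply]
  rw [Finset.sum_congr rfl (fun j _ => step j), Finset.sum_add_distrib]
  rw [Finset.sum_ite_eq, Finset.sum_ite_eq]
  simp

private lemma cycle_eval_off {e : Fin (n+1) → Edge} {v : Fin (n+1) → V}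
    (u : Fin (n+1) → ℚ)
    (hu : ∀ i, u i • col G sgn (e i) =
      (Pi.single (v i) 1 : V → ℚ) + sg sgn (e i) • (Pi.single (v ((finRotate (n+1)) i)) 1 : V → ℚ))
    (h : Fin (n+1) → ℚ) (w : V) (hw : ∀ k, w ≠ v k) :
    (∑ j : Fin (n+1), (h j * u j) • col G sgn (e j)) w = 0 := by
  rw [Finset.sum_apply]
  refine Finset.sum_eq_zero (fun j _ => ?_)
  have h1 : (h j * u j) • col G sgn (e j) = h j • (u j • col G sgn (e j)) := by
    rw [smul_smul]
  rw [h1, hu j]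
  simp only [Pi.smul_apply, Pi.add_apply, Pi.single_apply, smul_eq_mul,
    if_neg (hw j), if_neg (hw ((finRotate (n+1)) j))]
  ring

private def sN (e : Fin (n+1) → Edge) : ℕ → ℚ :=
  fun i => sg sgn (e ⟨i % (n+1), Nat.mod_lt _ (Nat.succ_pos n)⟩)

private lemma sN_eq (e : Fin (n+1) → Edge) {i : ℕ} (hi : i < n + 1) :
    sN sgn e i = sg sgn (e ⟨i, hi⟩) := by
  unfold sN
  congr 2
  exact Fin.ext (Nat.mod_eq_of_lt hi)

private lemma cycle_prod {e : Fin (n+1) → Edge} {C : Finset Edge}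
    (he : Function.Injective e) (him : Finset.univ.image e = C) :
    ∏ i ∈ Finset.range (n+1), (-(sN sgn e i))
      = (-1 : ℚ) ^ ((C.filter (fun f => sgn f)).card) := by
  have h1 : ∏ i ∈ Finset.range (n+1), (-(sN sgn e i))
      = ∏ i : Fin (n+1), (-(sg sgn (e i))) := by
    rw [← Fin.prod_univ_eq_prod_range (fun i => (-(sN sgn e i)))]
    refine Finset.prod_congr rfl (fun i _ => ?_)
    rw [sN_eq sgn e i.isLt]
  have h2 : ∀ i : Fin (n+1), (-(sg sgn (e i))) = if sgn (e i) then (-1 : ℚ) else 1 := by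
    intro i; unfold sg; split <;> norm_num
  rw [h1, Finset.prod_congr rfl (fun i _ => h2 i), Finset.prod_ite, Finset.prod_const,
    Finset.prod_const, one_pow, mul_one]
  congr 1
  rw [← him, Finset.filter_image, Finset.card_image_of_injective _ he]

end CycleComp


/-- the columns of an unbalanced cycle satisfy no nontrivial linear relation. -/
lemma unbal_cycle_indep {C : Finset Edge} (hC : IsCycleSet G C) (hb : ¬ BalancedCycle sgn C)
    (c : Edge → ℚ) (hsupp : ∀ f, c f ≠ 0 → f ∈ C)
    (hker : ∑ f : Edge, c f • col G sgn f = 0) : c = 0 := by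
  obtain ⟨m, hm, e, v, he, hv, him, hends⟩ := hC
  obtain ⟨n, rfl⟩ : ∃ n, m = n + 1 := ⟨m - 1, (Nat.succ_pred_eq_of_pos hm).symm⟩
  have hends' : ∀ i, G.ends (e i) = s(v i, v ((finRotate (n+1)) i)) := by
    intro i; rw [rot_eq_mk]; exact hends i
  choose u huu hu using fun i => exists_unit_col G sgn (hends' i)
  set h : Fin (n+1) → ℚ := fun j => c (e j) * u j with hh_def
  have hcu : ∀ j, h j * u j = c (e j) := by
    intro j; rw [hh_def]; simp only []; rw [mul_assoc, huu j, mul_one]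
  have hker2 : ∑ j : Fin (n+1), (h j * u j) • col G sgn (e j) = 0 := by
    rw [Finset.sum_congr rfl (fun j _ => by rw [hcu j])]
    have him2 : ∑ f ∈ Finset.univ.image e, c f • col G sgn f
        = ∑ j : Fin (n+1), c (e j) • col G sgn (e j) :=
      Finset.sum_image (fun x _ y _ hxy => he hxy)
    rw [← him2, him, ← hker]
    have hss : ∑ f ∈ C, c f • col G sgn f = ∑ f : Edge, c f • col G sgn f := by
      refine Finset.sum_subset (Finset.subset_univ C) (fun f _ hf => ?_)
      rw [not_not.mp (not_imp_not.mpr (hsupp f) hf), zero_smul]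
    exact hss
  have hrec0 : ∀ k, h k + h ((finRotate (n+1)).symm k) * sg sgn (e ((finRotate (n+1)).symm k)) = 0 := by
    intro k
    have hev := cycle_eval G sgn hv u hu h k
    rw [hker2] at hev
    simpa using hev.symm
  have hstep : ∀ j : ℕ, ∀ hj : j + 1 < n + 1,
      h ⟨j+1, hj⟩ = -(sN sgn e j) * h ⟨j, Nat.lt_of_succ_lt hj⟩ := by
    intro j hj
    have hr : (finRotate (n+1)).symm ⟨j+1, hj⟩ = ⟨j, Nat.lt_of_succ_lt hj⟩ := by
      rw [← rot_apply_of_lt hj]; exact Equiv.symm_apply_apply _ _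
    have hrec := hrec0 ⟨j+1, hj⟩
    rw [hr] at hrec
    rw [sN_eq sgn e (Nat.lt_of_succ_lt hj)]
    linarith
  have hclaim : ∀ j : ℕ, ∀ hj : j < n + 1,
      h ⟨j, hj⟩ = (∏ i ∈ Finset.range j, (-(sN sgn e i))) * h ⟨0, Nat.succ_pos n⟩ := by
    intro j
    induction j with
    | zero => intro hj; simp
    | succ j ih =>
        intro hj
        rw [hstep j hj, ih (Nat.lt_of_succ_lt hj), Finset.prod_range_succ]
        ring
  have hP : ∏ i ∈ Finset.range (n+1), (-(sN sgn e i)) = -1 := by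
    rw [cycle_prod sgn he him]
    exact Odd.neg_one_pow (Nat.not_even_iff_odd.mp hb)
  have key : (∏ i ∈ Finset.range n, (-(sN sgn e i))) * sN sgn e n = 1 := by
    rw [Finset.prod_range_succ] at hP
    linear_combination -hP
  have hlast := hrec0 ⟨0, Nat.succ_pos n⟩
  have hr0 : (finRotate (n+1)).symm ⟨0, Nat.succ_pos n⟩ = ⟨n, Nat.lt_succ_self n⟩ := by
    rw [← rot_last]; exact Equiv.symm_apply_apply _ _
  rw [hr0, hclaim n (Nat.lt_succ_self n), ← sN_eq sgn e (Nat.lt_succ_self n)] at hlast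
  have h0 : h ⟨0, Nat.succ_pos n⟩ = 0 := by
    have h2 : h ⟨0, Nat.succ_pos n⟩ * 2 = 0 := by
      linear_combination hlast - h ⟨0, Nat.succ_pos n⟩ * key
    linarith
  have hzero : ∀ j, h j = 0 := by
    intro j
    have := hclaim j.val j.isLt
    rw [Fin.eta] at this
    rw [this, h0, mul_zero]
  funext f
  by_contra hf
  have hfC := hsupp f hf
  rw [← him, Finset.mem_image] at hfC
  obtain ⟨j, _, rfl⟩ := hfC
  exact hf (by rw [← hcu j, hzero j, zero_mul, Pi.zero_apply])

/-- the columns of a balanced cycle admit a nontrivial linear relation. -/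
lemma balanced_cycle_dep {C : Finset Edge} (hC : IsCycleSet G C) (hb : BalancedCycle sgn C) :
    ∃ c : Edge → ℚ, c ≠ 0 ∧ (∀ f, c f ≠ 0 → f ∈ C) ∧ ∑ f : Edge, c f • col G sgn f = 0 := by
  obtain ⟨m, hm, e, v, he, hv, him, hends⟩ := hC
  obtain ⟨n, rfl⟩ : ∃ n, m = n + 1 := ⟨m - 1, (Nat.succ_pred_eq_of_pos hm).symm⟩
  have hends' : ∀ i, G.ends (e i) = s(v i, v ((finRotate (n+1)) i)) := by
    intro i; rw [rot_eq_mk]; exact hends i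
  choose u huu hu using fun i => exists_unit_col G sgn (hends' i)
  have hu_ne : ∀ j, u j ≠ 0 := by
    intro j hj; have := huu j; rw [hj, mul_zero] at this; norm_num at this
  set hN : ℕ → ℚ := fun j => ∏ i ∈ Finset.range j, (-(sN sgn e i)) with hN_def
  have hN_ne : ∀ j, hN j ≠ 0 := by
    intro j
    rw [hN_def]
    refine Finset.prod_ne_zero_iff.mpr (fun i _ => ?_)
    simp only [ne_eq, neg_eq_zero]
    exact sg_ne_zero sgn _
  set hh : Fin (n+1) → ℚ := fun j => hN j.val with hh_def
  set c : Edge → ℚ := fun f => ∑ j : Fin (n+1), if e j = f then hh j * u j else 0 with hc_def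
  have hc_at : ∀ k : Fin (n+1), c (e k) = hh k * u k := by
    intro k
    rw [hc_def]
    simp only []
    rw [Finset.sum_eq_single k (fun j _ hj => if_neg (fun hc => hj (he hc)))
      (fun hk => absurd (Finset.mem_univ k) hk), if_pos rfl]
  refine ⟨c, ?_, ?_, ?_⟩
  · intro h0
    have := congrFun h0 (e ⟨0, Nat.succ_pos n⟩)
    rw [hc_at ⟨0, Nat.succ_pos n⟩, Pi.zero_apply] at this
    exact (mul_ne_zero (hN_ne 0) (hu_ne _)) this
  · intro f hf
    by_contra hfC
    apply hf
    rw [hc_def]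
    refine Finset.sum_eq_zero (fun j _ => if_neg (fun hc => hfC ?_))
    rw [← hc, ← him]
    exact Finset.mem_image_of_mem e (Finset.mem_univ j)
  · have hswap : ∑ f : Edge, c f • col G sgn f
        = ∑ j : Fin (n+1), (hh j * u j) • col G sgn (e j) := by
      rw [hc_def]
      simp only [Finset.sum_smul, ite_smul, zero_smul]
      rw [Finset.sum_comm]
      refine Finset.sum_congr rfl (fun j _ => ?_)
      rw [Finset.sum_ite_eq, if_pos (Finset.mem_univ _)]
    rw [hswap]
    funext w
    by_cases hw : ∃ k, w = v k
    · obtain ⟨k, rfl⟩ := hw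
      rw [cycle_eval G sgn hv u hu hh k, Pi.zero_apply]
      rcases k with ⟨kv, hk⟩
      cases kv with
      | zero =>
          have hr0 : (finRotate (n+1)).symm ⟨0, hk⟩ = ⟨n, Nat.lt_succ_self n⟩ := by
            rw [← rot_last]; exact Equiv.symm_apply_apply _ _
          rw [hr0]
          have hP : ∏ i ∈ Finset.range (n+1), (-(sN sgn e i)) = 1 := by
            rw [cycle_prod sgn he him]
            exact Even.neg_one_pow hb
          rw [Finset.prod_range_succ] at hP
          simp only [hh_def, hN_def, ← sN_eq sgn e (Nat.lt_succ_self n)]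
          simp only [Finset.prod_range_zero]
          linear_combination -hP
      | succ j =>
          have hr : (finRotate (n+1)).symm ⟨j+1, hk⟩ = ⟨j, Nat.lt_of_succ_lt hk⟩ := by
            rw [← rot_apply_of_lt hk]; exact Equiv.symm_apply_apply _ _
          rw [hr]
          simp only [hh_def, hN_def, ← sN_eq sgn e (Nat.lt_of_succ_lt hk)]
          rw [Finset.prod_range_succ]
          ring
    · push_neg at hw
      rw [cycle_eval_off G sgn u hu hh w hw, Pi.zero_apply]


section LinkedLemmas

variable {F : Finset Edge} {a b f g : Edge}

lemma linked_symm (h : Linked G F a b) : Linked G F b a := by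
  have hsym : Symmetric (fun a b : Edge => a ∈ F ∧ b ∈ F ∧ ∃ x, x ∈ G.ends a ∧ x ∈ G.ends b) := by
    rintro x y ⟨hx, hy, w, hw1, hw2⟩
    exact ⟨hy, hx, w, hw2, hw1⟩
  exact @Std.Symm.symm _ _ (@Relation.ReflTransGen.stdSymm _ _ ⟨hsym⟩) _ _ h

lemma linked_mono {F' : Finset Edge} (hFF : F ⊆ F') (h : Linked G F a b) :
    Linked G F' a b := by
  refine Relation.ReflTransGen.mono ?_ _ _ h
  rintro x y ⟨hx, hy, w, hw1, hw2⟩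
  exact ⟨hFF hx, hFF hy, w, hw1, hw2⟩

omit [Fintype V] [Fintype Edge] in
lemma mem_component : f ∈ Component G F a ↔ f ∈ F ∧ Linked G F a f := Finset.mem_filter

lemma component_subset : Component G F a ⊆ F := Finset.filter_subset _ _

lemma self_mem_component (ha : a ∈ F) : a ∈ Component G F a := by
  rw [mem_component G]
  exact ⟨ha, Relation.ReflTransGen.refl⟩

lemma component_closed {x : V} (hg : g ∈ Component G F a) (hf : f ∈ F)
    (hxg : x ∈ G.ends g) (hxf : x ∈ G.ends f) : f ∈ Component G F a := by
  rw [mem_component G] at hg ⊢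
  exact ⟨hf, hg.2.tail ⟨hg.1, hf, x, hxg, hxf⟩⟩

lemma component_chain (ha : a ∈ F) (h : Linked G F a f) :
    Linked G (Component G F a) a f := by
  induction h with
  | refl => exact Relation.ReflTransGen.refl
  | tail hab step ih =>
      rename_i b' c'
      obtain ⟨hb', hc', x, hx1, hx2⟩ := step
      have hbmem : b' ∈ Component G F a := by
        rw [mem_component G]; exact ⟨hb', hab⟩
      have hcmem : c' ∈ Component G F a := by
        rw [mem_component G]; exact ⟨hc', hab.tail ⟨hb', hc', x, hx1, hx2⟩⟩
      exact ih.tail ⟨hbmem, hcmem, x, hx1, hx2⟩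

lemma cycle_linked {C : Finset Edge} (hC : IsCycleSet G C) (hCF : C ⊆ F)
    (hf : f ∈ C) (hg : g ∈ C) : Linked G F f g := by
  obtain ⟨m, hm, e, v, he, hv, him, hends⟩ := hC
  obtain ⟨n, rfl⟩ : ∃ n, m = n + 1 := ⟨m - 1, (Nat.succ_pred_eq_of_pos hm).symm⟩
  have hmem : ∀ i : Fin (n+1), e i ∈ F := fun i =>
    hCF (him ▸ Finset.mem_image_of_mem e (Finset.mem_univ i))
  have key : ∀ j : ℕ, ∀ hj : j < n + 1, Linked G F (e ⟨0, Nat.succ_pos n⟩) (e ⟨j, hj⟩) := by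
    intro j
    induction j with
    | zero => intro hj; exact Relation.ReflTransGen.refl
    | succ j ih =>
        intro hj
        have hjn : j < n + 1 := Nat.lt_of_succ_lt hj
        refine (ih hjn).tail ⟨hmem _, hmem _, v ⟨j+1, hj⟩, ?_, ?_⟩
        · rw [hends ⟨j, hjn⟩, ← rot_eq_mk, rot_apply_of_lt hj]
          exact Sym2.mem_mk_right _ _
        · rw [hends ⟨j+1, hj⟩]
          exact Sym2.mem_mk_left _ _
  rw [← him, Finset.mem_image] at hf hg
  obtain ⟨j1, _, rfl⟩ := hf
  obtain ⟨j2, _, rfl⟩ := hg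
  have h1 := key j1.val j1.isLt
  have h2 := key j2.val j2.isLt
  rw [Fin.eta] at h1 h2
  exact (linked_symm G h1).trans h2

lemma cycle_subset_component {C : Finset Edge} (hC : IsCycleSet G C) (hCF : C ⊆ F)
    {f0 : Edge} (hf0 : f0 ∈ C) (hf0c : f0 ∈ Component G F a) : C ⊆ Component G F a := by
  intro g hg
  rw [mem_component G] at hf0c ⊢
  exact ⟨hCF hg, hf0c.2.trans (cycle_linked G hC hCF hf0 hg)⟩

end LinkedLemmas

/-- any nonempty edge set in which every incident vertex meets two distinct edges
contains a cycle. -/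
lemma exists_cycle_of_mindeg {S : Finset Edge} (hne : S.Nonempty)
    (hdeg : ∀ w : V, ∀ f, f ∈ S → w ∈ G.ends f → ∃ g ∈ S, g ≠ f ∧ w ∈ G.ends g) :
    ∃ C, C ⊆ S ∧ IsCycleSet G C := by
  by_cases hloop : ∃ p ∈ S, (pe G p).1 = (pe G p).2
  · obtain ⟨p, hp, hpp⟩ := hloop
    refine ⟨{p}, Finset.singleton_subset_iff.mpr hp, loop_cycle G (a := (pe G p).1) ?_⟩
    rw [ends_eq G p, hpp]
  push_neg at hloop
  set P : ℕ → Prop := fun k => 0 < k ∧ ∃ ev : (ℕ → Edge) × (ℕ → V),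
    (∀ i < k, ev.1 i ∈ S) ∧ (∀ i < k, ∀ j < k, ev.1 i = ev.1 j → i = j) ∧
    (∀ i ≤ k, ∀ j ≤ k, ev.2 i = ev.2 j → i = j) ∧
    (∀ i < k, G.ends (ev.1 i) = s(ev.2 i, ev.2 (i+1))) with hP_def
  have hb : ∀ k, P k → k ≤ S.card := by
    rintro k ⟨hk0, ⟨e, v⟩, heS, heinj, -, -⟩
    have himcard : ((Finset.range k).image e).card = k := by
      rw [Finset.card_image_of_injOn (fun i hi j hj hij =>
        heinj i (Finset.mem_range.mp hi) j (Finset.mem_range.mp hj) hij), Finset.card_range]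
    rw [← himcard]
    refine Finset.card_le_card (fun x hx => ?_)
    obtain ⟨i, hi, rfl⟩ := Finset.mem_image.mp hx
    exact heS i (Finset.mem_range.mp hi)
  have P1 : P 1 := by
    obtain ⟨f, hf⟩ := hne
    refine ⟨Nat.one_pos, (fun _ => f, fun i => if i = 0 then (pe G f).1 else (pe G f).2),
      fun _ _ => hf, fun i hi j hj _ => by omega, ?_, ?_⟩
    · intro i hi j hj hij
      dsimp only at hij
      by_cases hi0 : i = 0 <;> by_cases hj0 : j = 0
      · omega
      · rw [if_pos hi0, if_neg hj0] at hij
        exact absurd hij (hloop f hf)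
      · rw [if_neg hi0, if_pos hj0] at hij
        exact absurd hij.symm (hloop f hf)
      · omega
    · intro i hi
      have hi0 : i = 0 := by omega
      subst hi0
      have e1 : G.ends f = s((pe G f).1, (pe G f).2) := ends_eq G f
      simpa using e1
  have hSpos : 1 ≤ S.card := hne.card_pos
  have hk : P (Nat.findGreatest P S.card) := Nat.findGreatest_spec hSpos P1
  set k := Nat.findGreatest P S.card with hk_def
  have hmax : ¬ P (k + 1) := by
    intro h
    have := Nat.le_findGreatest (hb _ h) h
    omega
  obtain ⟨hk0, ⟨e, v⟩, heS, heinj, hvinj, hends⟩ := hk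
  have hk1 : k - 1 < k := by omega
  have hk1' : k - 1 + 1 = k := by omega
  have hwk : v k ∈ G.ends (e (k-1)) := by
    rw [hends (k-1) hk1, hk1']
    exact Sym2.mem_mk_right _ _
  obtain ⟨f, hfS, hfne, hwf⟩ := hdeg (v k) (e (k-1)) (heS _ hk1) hwk
  have hf_new : ∀ i, i < k → e i ≠ f := by
    intro i hi hif
    have hvk : v k ∈ G.ends (e i) := hif ▸ hwf
    rw [hends i hi, Sym2.mem_iff] at hvk
    have : k = i ∨ k = i + 1 := by
      rcases hvk with h | h
      · exact Or.inl (hvinj k le_rfl i (by omega) h)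
      · exact Or.inr (hvinj k le_rfl (i+1) (by omega) h)
    have hik : i = k - 1 := by omega
    rw [hik] at hif
    exact hfne hif.symm
  obtain ⟨x, hfx⟩ := Sym2.mem_iff_exists.mp hwf
  have hx_ne : x ≠ v k := by
    intro h
    apply hloop f hfS
    have := (ends_eq G f).symm.trans (hfx.trans (by rw [h]))
    rw [Sym2.eq_iff] at this
    rcases this with ⟨h1, h2⟩ | ⟨h1, h2⟩ <;> rw [h1, h2]
  by_cases hxv : ∃ j, j ≤ k ∧ v j = x
  · obtain ⟨j, hjk, hjx⟩ := hxv
    have hjlt : j < k := by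
      rcases Nat.lt_or_ge j k with h | h
      · exact h
      · exfalso; apply hx_ne; rw [← hjx]; congr 1; omega
    set m := k - j + 1 with hm_def
    have hm0 : 0 < m := by omega
    set ce : Fin m → Edge := fun i => if i.val < k - j then e (j + i.val) else f with hce_def
    set cv : Fin m → V := fun i => v (j + i.val) with hcv_def
    refine ⟨Finset.univ.image ce, ?_, m, hm0, ce, cv, ?_, ?_, rfl, ?_⟩
    · intro y hy
      obtain ⟨i, -, rfl⟩ := Finset.mem_image.mp hy
      rw [hce_def]
      dsimp only
      split
      · exact heS _ (by omega)
      · exact hfS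
    · intro i i' hii
      rw [hce_def] at hii
      dsimp only at hii
      have hiv := i.isLt
      have hiv' := i'.isLt
      split_ifs at hii with h1 h2 h2
      · exact Fin.ext (by have := heinj _ (by omega) _ (by omega) hii; omega)
      · exact absurd hii (hf_new _ (by omega))
      · exact absurd hii.symm (hf_new _ (by omega))
      · exact Fin.ext (by omega)
    · intro i i' hii
      rw [hcv_def] at hii
      dsimp only at hii
      have hiv := i.isLt
      have hiv' := i'.isLt
      exact Fin.ext (by have := hvinj _ (by omega) _ (by omega) hii; omega)
    · intro i
      have hiv := i.isLt
      by_cases h1 : i.val < k - j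
      · have hmod : (i.val + 1) % m = i.val + 1 := Nat.mod_eq_of_lt (by omega)
        have hce : ce i = e (j + i.val) := by rw [hce_def]; exact dif_pos h1
        rw [hce, hends (j + i.val) (by omega), hcv_def]
        dsimp only
        rw [hmod, Nat.add_assoc]
      · have hieq : i.val = k - j := by omega
        have hmod : (i.val + 1) % m = 0 := by rw [hieq]; simp [hm_def]
        have hce : ce i = f := by rw [hce_def]; exact dif_neg h1
        rw [hce, hfx, hcv_def]
        dsimp only
        rw [hmod]
        have h2 : v (j + i.val) = v k := by congr 1; omega
        have h3 : v (j + 0) = x := by rw [Nat.add_zero]; exact hjx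
        rw [h2, h3]
  · push_neg at hxv
    apply absurd hmax
    push_neg
    refine ⟨by omega, (fun i => if i < k then e i else f, fun i => if i ≤ k then v i else x),
      ?_, ?_, ?_, ?_⟩
    · intro i hi
      dsimp only
      split
      · exact heS _ (by assumption)
      · exact hfS
    · intro i hi j hj hij
      dsimp only at hij
      split_ifs at hij with h1 h2 h2
      · exact heinj _ h1 _ h2 hij
      · exact absurd hij (hf_new _ h1)
      · exact absurd hij.symm (hf_new _ h2)
      · omega
    · intro i hi j hj hij
      dsimp only at hij
      split_ifs at hij with h1 h2 h2
      · exact hvinj _ h1 _ h2 hij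
      · exact absurd hij (hxv _ h1)
      · exact absurd hij.symm (hxv _ h2)
      · omega
    · intro i hi
      dsimp only
      by_cases h1 : i < k
      · rw [if_pos h1, if_pos (by omega : i ≤ k), if_pos (by omega : i + 1 ≤ k)]
        exact hends i h1
      · have hik : i = k := by omega
        rw [if_neg h1, if_pos (by omega : i ≤ k), if_neg (by omega : ¬ i + 1 ≤ k), hik]
        exact hfx


/-- two vectors in char 2. -/
private lemma char2_add_self (y : V → ZMod 2) : y + y = 0 := by
  funext u
  have : ∀ a : ZMod 2, a + a = 0 := by decide
  exact this (y u)

private lemma char2_triangle (a b c : V) :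
    (Pi.single a 1 + Pi.single c 1 : V → ZMod 2)
      = (Pi.single a 1 + Pi.single b 1) + (Pi.single b 1 + Pi.single c 1) := by
  funext u
  simp only [Pi.add_apply, Pi.single_apply]
  split_ifs <;> decide

section Psi

variable (K : Finset Edge)

/-- the unsigned incidence map over `𝔽₂` restricted to `K`. -/
def psi2 : (↑K → ZMod 2) →ₗ[ZMod 2] (V → ZMod 2) where
  toFun x := ∑ j : ↑K, x j • ucol G ↑j
  map_add' x y := by
    simp only [Pi.add_apply, add_smul]
    rw [Finset.sum_add_distrib]
  map_smul' a x := by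
    simp only [Pi.smul_apply, smul_eq_mul, RingHom.id_apply]
    rw [Finset.smul_sum]
    exact Finset.sum_congr rfl (fun j _ => by rw [mul_smul])

lemma psi2_indicator {C : Finset Edge} (hCK : C ⊆ K) :
    psi2 G K (fun j => if ↑j ∈ C then 1 else 0) = ∑ f ∈ C, ucol G f := by
  show ∑ j : ↑K, (if (j : Edge) ∈ C then (1 : ZMod 2) else 0) • ucol G ↑j = _
  rw [Finset.sum_coe_sort K (fun f => (if f ∈ C then (1 : ZMod 2) else 0) • ucol G f)]
  have hconv : ∀ f ∈ K, (if f ∈ C then (1 : ZMod 2) else 0) • ucol G f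
      = if f ∈ C then ucol G f else 0 := by
    intro f _
    split_ifs <;> simp
  rw [Finset.sum_congr rfl hconv, ← Finset.sum_filter, Finset.filter_mem_eq_inter,
    Finset.inter_eq_right.mpr hCK]

lemma indicator_mem_ker {C : Finset Edge} (hCK : C ⊆ K) (hC : IsCycleSet G C) :
    (fun j : ↑K => if (j : Edge) ∈ C then (1 : ZMod 2) else 0) ∈ LinearMap.ker (psi2 G K) := by
  rw [LinearMap.mem_ker, psi2_indicator G K hCK]
  exact ucol_cycle_sum G hC

lemma ucol_mem_range {f : Edge} (hf : f ∈ K) : ucol G f ∈ LinearMap.range (psi2 G K) := by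
  refine ⟨fun j => if (j : Edge) ∈ ({f} : Finset Edge) then 1 else 0, ?_⟩
  rw [psi2_indicator G K (Finset.singleton_subset_iff.mpr hf), Finset.sum_singleton]

end Psi

/-- a nonzero `𝔽₂`-kernel vector supports a cycle. -/
lemma kernel_cycle {x : Edge → ZMod 2} (hker : ∑ f : Edge, x f • ucol G f = 0)
    (hne : ∃ f, x f ≠ 0) : ∃ C : Finset Edge, (∀ f ∈ C, x f ≠ 0) ∧ IsCycleSet G C := by
  set T := Finset.univ.filter (fun f => x f ≠ 0) with hT_def
  have hmemT : ∀ f, f ∈ T ↔ x f ≠ 0 := by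
    intro f; rw [hT_def, Finset.mem_filter]; simp
  have hTne : T.Nonempty := by
    obtain ⟨f, hf⟩ := hne; exact ⟨f, (hmemT f).mpr hf⟩
  by_cases hloop : ∃ p ∈ T, (pe G p).1 = (pe G p).2
  · obtain ⟨p, hp, hpp⟩ := hloop
    refine ⟨{p}, ?_, loop_cycle G (a := (pe G p).1) (by rw [ends_eq G p, hpp])⟩
    intro f hf
    rw [Finset.mem_singleton] at hf
    exact hf ▸ (hmemT p).mp hp
  · push_neg at hloop
    have hdeg : ∀ w : V, ∀ f, f ∈ T → w ∈ G.ends f → ∃ g ∈ T, g ≠ f ∧ w ∈ G.ends g := by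
      intro w f hf hw
      by_contra hno
      push_neg at hno
      have hw0 := congrFun hker w
      rw [Finset.sum_apply, Pi.zero_apply] at hw0
      rw [Finset.sum_eq_single f (fun g _ hgf => ?_) (fun hf' => absurd (Finset.mem_univ f) hf')]
        at hw0
      · have h1 : ucol G f w = 1 := ucol_apply_of_mem G hw (hloop f hf)
        rw [Pi.smul_apply, h1, smul_eq_mul, mul_one] at hw0
        exact ((hmemT f).mp hf) hw0
      · by_cases hg0 : x g = 0
        · rw [Pi.smul_apply, hg0, zero_smul]
        · have hgT : g ∈ T := (hmemT g).mpr hg0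
          by_cases hcw : ucol G g w = 0
          · rw [Pi.smul_apply, hcw, smul_zero]
          · exact absurd (ucol_apply_ne G hcw) (hno g hgT hgf)
    obtain ⟨C, hCT, hC⟩ := exists_cycle_of_mindeg G hTne hdeg
    exact ⟨C, fun f hf => (hmemT f).mp (hCT hf), hC⟩

/-- the vertex set of an edge set. -/
def VS (K : Finset Edge) : Finset V :=
  K.image (fun f => (pe G f).1) ∪ K.image (fun f => (pe G f).2)

lemma mem_VS {K : Finset Edge} {w : V} {f : Edge} (hf : f ∈ K) (hw : w ∈ G.ends f) :
    w ∈ VS G K := by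
  rw [mem_ends_iff] at hw
  rw [VS, Finset.mem_union]
  rcases hw with h | h
  · exact Or.inl (Finset.mem_image.mpr ⟨f, hf, h.symm⟩)
  · exact Or.inr (Finset.mem_image.mpr ⟨f, hf, h.symm⟩)

lemma p1_mem_VS {K : Finset Edge} {f : Edge} (hf : f ∈ K) : (pe G f).1 ∈ VS G K :=
  mem_VS G hf (by rw [ends_eq G f]; exact Sym2.mem_mk_left _ _)

lemma card_le_finrank_of_li {𝕜 M ι : Type*} [Field 𝕜] [AddCommGroup M] [Module 𝕜 M]
    [FiniteDimensional 𝕜 M] [Fintype ι] {v : ι → M} (U : Submodule 𝕜 M) (hv : ∀ i, v i ∈ U)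
    (hli : LinearIndependent 𝕜 v) : Fintype.card ι ≤ Module.finrank 𝕜 U := by
  have h2 : LinearIndependent 𝕜 (fun i => (⟨v i, hv i⟩ : U)) := by
    refine LinearIndependent.of_comp U.subtype ?_
    convert hli
    rfl
  exact h2.fintype_card_le_finrank

/-- rank of the `𝔽₂` incidence map is at most `|W| - 1`. -/
lemma finrank_range_psi2_le {K : Finset Edge} {w0 : V} (hw0 : w0 ∈ VS G K) :
    Module.finrank (ZMod 2) (LinearMap.range (psi2 G K)) ≤ (VS G K).card - 1 := by
  classical
  set Z := ((VS G K).erase w0).image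
    (fun w => (Pi.single w0 1 + Pi.single w 1 : V → ZMod 2)) with hZ_def
  have hzmem : ∀ w ∈ VS G K, (Pi.single w0 1 + Pi.single w 1 : V → ZMod 2)
      ∈ Submodule.span (ZMod 2) (↑Z : Set (V → ZMod 2)) := by
    intro w hw
    by_cases hww : w = w0
    · subst hww
      rw [char2_add_self]
      exact Submodule.zero_mem _
    · refine Submodule.subset_span ?_
      rw [hZ_def]
      exact_mod_cast Finset.mem_image.mpr ⟨w, Finset.mem_erase.mpr ⟨hww, hw⟩, rfl⟩
  have hsub : LinearMap.range (psi2 G K) ≤ Submodule.span (ZMod 2) (↑Z : Set (V → ZMod 2)) := by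
    rintro y ⟨x, rfl⟩
    refine Submodule.sum_mem _ (fun j _ => Submodule.smul_mem _ _ ?_)
    have hju : ucol G (↑j : Edge) = (Pi.single w0 1 + Pi.single (pe G (↑j : Edge)).1 1)
        + (Pi.single w0 1 + Pi.single (pe G (↑j : Edge)).2 1) := by
      rw [show (ucol G (↑j : Edge) : V → ZMod 2) = Pi.single (pe G (↑j : Edge)).1 1
          + Pi.single (pe G (↑j : Edge)).2 1 from rfl]
      funext u
      simp only [Pi.add_apply, Pi.single_apply]
      split_ifs <;> decide
    rw [hju]
    refine Submodule.add_mem _ (hzmem _ ?_) (hzmem _ ?_)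
    · exact mem_VS G j.2 (by rw [ends_eq G _]; exact Sym2.mem_mk_left _ _)
    · exact mem_VS G j.2 (by rw [ends_eq G _]; exact Sym2.mem_mk_right _ _)
  calc Module.finrank (ZMod 2) (LinearMap.range (psi2 G K))
      ≤ Module.finrank (ZMod 2) (Submodule.span (ZMod 2) (↑Z : Set (V → ZMod 2))) :=
        Submodule.finrank_mono hsub
    _ ≤ Z.card := finrank_span_finset_le_card Z
    _ ≤ ((VS G K).erase w0).card := Finset.card_image_le
    _ = (VS G K).card - 1 := Finset.card_erase_of_mem hw0

/-- the star family is linearly independent over `𝔽₂`. -/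
lemma star_li (W : Finset V) (w0 : V) :
    LinearIndependent (ZMod 2)
      (fun w : ↑(W.erase w0) => (Pi.single w0 1 + Pi.single (↑w : V) 1 : V → ZMod 2)) := by
  rw [Fintype.linearIndependent_iff]
  intro g hg w
  have := congrFun hg (↑w : V)
  rw [Finset.sum_apply, Pi.zero_apply] at this
  rw [Finset.sum_eq_single w (fun w' _ hww' => ?_) (fun hw' => absurd (Finset.mem_univ w) hw')]
    at this
  · have hwne : (↑w : V) ≠ w0 := (Finset.mem_erase.mp w.2).1
    simpa [Pi.single_apply, hwne] using this
  · have hne2 : (↑w : V) ≠ (↑w' : V) := fun hc => hww' (Subtype.ext hc.symm)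
    have hwne : (↑w : V) ≠ w0 := (Finset.mem_erase.mp w.2).1
    simp [Pi.single_apply, hwne, hne2]


lemma zmod2_ne_zero {a : ZMod 2} (h : a ≠ 0) : a = 1 := by revert a; decide

lemma cyc_two_edges {C : Finset Edge} (hC : IsCycleSet G C)
    (hnl : ∀ f ∈ C, (pe G f).1 ≠ (pe G f).2) {b : Edge} {x : V}
    (hb : b ∈ C) (hx : x ∈ G.ends b) :
    ∃ d1 d2, d1 ∈ C ∧ d2 ∈ C ∧ d1 ≠ d2 ∧ x ∈ G.ends d1 ∧ x ∈ G.ends d2 := by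
  obtain ⟨m, hm, e, v, he, hv, him, hends⟩ := hC
  obtain ⟨n, rfl⟩ : ∃ n, m = n + 1 := ⟨m - 1, (Nat.succ_pred_eq_of_pos hm).symm⟩
  have hends' : ∀ i, G.ends (e i) = s(v i, v ((finRotate (n+1)) i)) := by
    intro i; rw [rot_eq_mk]; exact hends i
  have hmemC : ∀ i, e i ∈ C := fun i => him ▸ Finset.mem_image_of_mem e (Finset.mem_univ i)
  have hn : 1 ≤ n := by
    by_contra hn'
    have hn0 : n = 0 := by omega
    subst hn0
    have h0 := hends' ⟨0, Nat.one_pos⟩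
    have hr : (finRotate 1) ⟨0, Nat.one_pos⟩ = ⟨0, Nat.one_pos⟩ := Subsingleton.elim _ _
    rw [hr] at h0
    have h1 := (ends_eq G (e ⟨0, Nat.one_pos⟩)).symm.trans h0
    rw [Sym2.eq_iff] at h1
    apply hnl _ (hmemC ⟨0, Nat.one_pos⟩)
    rcases h1 with ⟨ha, hb'⟩ | ⟨ha, hb'⟩ <;> rw [ha, hb']
  have hrotne : ∀ k : Fin (n+1), (finRotate (n+1)) k ≠ k := by
    intro k hk
    have hval := congrArg Fin.val hk
    rw [rot_val] at hval
    rcases Nat.lt_or_ge (k.val + 1) (n+1) with h | h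
    · rw [Nat.mod_eq_of_lt h] at hval; omega
    · have hkn : k.val = n := by have := k.isLt; omega
      rw [hkn, Nat.mod_self] at hval
      omega
  have key : ∀ k : Fin (n+1), x = v k →
      ∃ d1 d2, d1 ∈ C ∧ d2 ∈ C ∧ d1 ≠ d2 ∧ x ∈ G.ends d1 ∧ x ∈ G.ends d2 := by
    intro k hxk
    refine ⟨e k, e ((finRotate (n+1)).symm k), hmemC _, hmemC _, ?_, ?_, ?_⟩
    · intro h
      have hkk := he h
      apply hrotne k
      conv_lhs => rw [hkk]
      exact (finRotate (n+1)).apply_symm_apply k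
    · rw [hends' k, hxk]; exact Sym2.mem_mk_left _ _
    · rw [hends' _, (finRotate (n+1)).apply_symm_apply k, hxk]
      exact Sym2.mem_mk_right _ _
  rw [← him, Finset.mem_image] at hb
  obtain ⟨i, -, rfl⟩ := hb
  rw [hends' i, Sym2.mem_iff] at hx
  rcases hx with h | h
  · exact key i h
  · exact key _ h

/-- a connected min-degree-2 edge set with a unique cycle is itself a cycle. -/
lemma struct {S : Finset Edge} (hne : S.Nonempty)
    (hdeg : ∀ w : V, ∀ f, f ∈ S → w ∈ G.ends f → ∃ g ∈ S, g ≠ f ∧ w ∈ G.ends g)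
    (hconn : ∀ f ∈ S, ∀ g ∈ S, Linked G S f g)
    (huniq : ∀ C₁, C₁ ⊆ S → IsCycleSet G C₁ → ∀ C₂, C₂ ⊆ S → IsCycleSet G C₂ → C₁ = C₂) :
    IsCycleSet G S := by
  obtain ⟨C, hCS, hC⟩ := exists_cycle_of_mindeg G hne hdeg
  set ind : ↑S → ZMod 2 := fun j => if (j : Edge) ∈ C then 1 else 0 with hind_def
  have hclass : ∀ x : ↑S → ZMod 2, psi2 G S x = 0 → x = 0 ∨ x = ind := by
    suffices h : ∀ N, ∀ x : ↑S → ZMod 2,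
        (Finset.univ.filter (fun j => x j ≠ 0)).card ≤ N → psi2 G S x = 0 → x = 0 ∨ x = ind by
      intro x hx
      exact h _ x le_rfl hx
    intro N
    induction N with
    | zero =>
        intro x hcard hker
        left
        funext j
        by_contra hj
        have : j ∈ Finset.univ.filter (fun j => x j ≠ 0) :=
          Finset.mem_filter.mpr ⟨Finset.mem_univ j, hj⟩
        rw [Finset.card_eq_zero.mp (Nat.le_zero.mp hcard)] at this
        exact absurd this (Finset.notMem_empty j)
    | succ N ihN =>
        intro x hcard hker
        by_cases hx0 : x = 0
        · exact Or.inl hx0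
        set xE : Edge → ZMod 2 := fun f => if h : f ∈ S then x ⟨f, h⟩ else 0 with hxE_def
        have hxE : ∀ j : ↑S, xE ↑j = x j := fun j => dif_pos j.2
        have hkerE : ∑ f : Edge, xE f • ucol G f = 0 := by
          have h1 : ∑ f : Edge, xE f • ucol G f = ∑ f ∈ S, xE f • ucol G f :=
            (Finset.sum_subset (Finset.subset_univ S)
              (fun f _ hf => by rw [hxE_def]; dsimp only; rw [dif_neg hf, zero_smul])).symm
          rw [h1, ← Finset.sum_coe_sort S (fun f => xE f • ucol G f)]
          rw [show ∑ j : ↑S, xE ↑j • ucol G ↑j = ∑ j : ↑S, x j • ucol G ↑j from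
            Finset.sum_congr rfl (fun j _ => by rw [hxE j])]
          exact hker
        have hxEne : ∃ f, xE f ≠ 0 := by
          obtain ⟨j, hj⟩ := Function.ne_iff.mp hx0
          exact ⟨↑j, by rw [hxE j]; simpa using hj⟩
        obtain ⟨C', hC'supp, hC'⟩ := kernel_cycle G hkerE hxEne
        have hC'S : C' ⊆ S := by
          intro f hf
          by_contra hfS
          exact hC'supp f hf (by rw [hxE_def]; exact dif_neg hfS)
        have hCC : C' = C := huniq C' hC'S hC' C hCS hC
        set y : ↑S → ZMod 2 := x + ind with hy_def
        have hyker : psi2 G S y = 0 := by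
          rw [hy_def, map_add, hker, zero_add]
          exact LinearMap.mem_ker.mp (indicator_mem_ker G S hCS hC)
        have hymem : ∀ j : ↑S, (j : Edge) ∈ C → y j = 0 := by
          intro j hj
          have hx1 : x j = 1 := by
            rw [← hxE j]
            exact zmod2_ne_zero (hC'supp _ (hCC ▸ hj))
          have : y j = x j + ind j := rfl
          rw [this, hx1, hind_def]
          simp only [if_pos hj]
          decide
        have hymem2 : ∀ j : ↑S, (j : Edge) ∉ C → y j = x j := by
          intro j hj
          have : y j = x j + ind j := rfl
          rw [this, hind_def]
          simp only [if_neg hj, add_zero]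
        obtain ⟨f1, hf1⟩ := cycle_nonempty G hC
        set j1 : ↑S := ⟨f1, hCS hf1⟩ with hj1_def
        have hycard : (Finset.univ.filter (fun j => y j ≠ 0)).card ≤ N := by
          have hss : Finset.univ.filter (fun j => y j ≠ 0)
              ⊂ Finset.univ.filter (fun j : ↑S => x j ≠ 0) := by
            constructor
            · intro j hj
              rw [Finset.mem_filter] at hj ⊢
              refine ⟨Finset.mem_univ j, ?_⟩
              by_cases hjC : (j : Edge) ∈ C
              · exact absurd (hymem j hjC) hj.2
              · rw [← hymem2 j hjC]; exact hj.2
            · intro hsub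
              have hj1x : x j1 ≠ 0 := by
                rw [← hxE j1]
                exact hC'supp _ (hCC ▸ hf1)
              have hj1y := hsub (Finset.mem_filter.mpr ⟨Finset.mem_univ j1, hj1x⟩)
              rw [Finset.mem_filter] at hj1y
              exact hj1y.2 (hymem j1 hf1)
          have := Finset.card_lt_card hss
          omega
        rcases ihN y hycard hyker with h0 | hind2
        · right
          funext j
          have := congrFun h0 j
          have hxy : x j + ind j = 0 := this
          have : ∀ a b : ZMod 2, a + b = 0 → a = b := by decide
          exact this _ _ hxy
        · exfalso
          have h1 := congrFun hind2 j1
          rw [hymem j1 hf1] at h1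
          rw [hind_def] at h1
          simp only [if_pos (show (j1 : Edge) ∈ C from hf1)] at h1
          exact absurd h1.symm one_ne_zero
  have hnull : Module.finrank (ZMod 2) (LinearMap.ker (psi2 G S)) ≤ 1 := by
    by_contra hgt
    push_neg at hgt
    set b := Module.finBasis (ZMod 2) ↥(LinearMap.ker (psi2 G S)) with hb_def
    have hball : ∀ i, ((b i : ↑S → ZMod 2)) = ind := by
      intro i
      rcases hclass (b i) (LinearMap.mem_ker.mp (b i).2) with h0 | h1
      · exact absurd (Submodule.coe_eq_zero.mp h0) (b.ne_zero i)
      · exact h1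
    have hbij : b ⟨0, by omega⟩ = b ⟨1, by omega⟩ :=
      Subtype.ext (by rw [hball, hball])
    have := b.injective hbij
    simp only [Fin.mk.injEq] at this
    omega
  obtain ⟨f0, hf0⟩ := hne
  have hw0 : (pe G f0).1 ∈ VS G S := p1_mem_VS G hf0
  have hWpos : 1 ≤ (VS G S).card := Finset.card_pos.mpr ⟨_, hw0⟩
  have hrank := finrank_range_psi2_le G hw0
  have hrn := LinearMap.finrank_range_add_finrank_ker (psi2 G S)
  have hdom : Module.finrank (ZMod 2) (↑S → ZMod 2) = S.card := by
    rw [Module.finrank_pi]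
    exact Fintype.card_coe S
  rw [hdom] at hrn
  have hSW : S.card ≤ (VS G S).card := by omega
  set W := VS G S with hW_def
  have hdeg2 : ∀ w ∈ W, 2 ≤ (S.filter (fun f => w ∈ G.ends f)).card := by
    intro w hw
    have hex : ∃ f ∈ S, w ∈ G.ends f := by
      rw [hW_def, VS, Finset.mem_union] at hw
      rcases hw with h | h <;> obtain ⟨f, hf, rfl⟩ := Finset.mem_image.mp h
      · exact ⟨f, hf, by rw [mem_ends_iff]; exact Or.inl rfl⟩
      · exact ⟨f, hf, by rw [mem_ends_iff]; exact Or.inr rfl⟩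
    obtain ⟨f, hf, hwf⟩ := hex
    obtain ⟨g, hg, hgne, hwg⟩ := hdeg w f hf hwf
    exact Finset.one_lt_card.mpr ⟨g, Finset.mem_filter.mpr ⟨hg, hwg⟩,
      f, Finset.mem_filter.mpr ⟨hf, hwf⟩, hgne⟩
  have hcnt2 : ∀ f ∈ S, (W.filter (fun w => w ∈ G.ends f)).card ≤ 2 := by
    intro f hf
    have hsub : W.filter (fun w => w ∈ G.ends f) ⊆ {(pe G f).1, (pe G f).2} := by
      intro w hw
      rw [Finset.mem_filter] at hw
      rw [Finset.mem_insert, Finset.mem_singleton]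
      exact (mem_ends_iff G).mp hw.2
    refine (Finset.card_le_card hsub).trans ?_
    exact (Finset.card_insert_le _ _).trans (by simp)
  have hswap : ∑ w ∈ W, (S.filter (fun f => w ∈ G.ends f)).card
      = ∑ f ∈ S, (W.filter (fun w => w ∈ G.ends f)).card := by
    simp_rw [Finset.card_filter]
    exact Finset.sum_comm
  have hsum_lb : 2 * W.card ≤ ∑ w ∈ W, (S.filter (fun f => w ∈ G.ends f)).card := by
    calc 2 * W.card = ∑ _w ∈ W, 2 := by rw [Finset.sum_const, smul_eq_mul, mul_comm]
      _ ≤ _ := Finset.sum_le_sum hdeg2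
  have hsum_ub : ∑ f ∈ S, (W.filter (fun w => w ∈ G.ends f)).card ≤ 2 * S.card := by
    calc ∑ f ∈ S, (W.filter (fun w => w ∈ G.ends f)).card ≤ ∑ _f ∈ S, 2 :=
        Finset.sum_le_sum hcnt2
      _ = 2 * S.card := by rw [Finset.sum_const, smul_eq_mul, mul_comm]
  have hsum_eq2 : ∑ f ∈ S, (W.filter (fun w => w ∈ G.ends f)).card = 2 * S.card := by
    omega
  have hsum_eq3 : ∑ w ∈ W, (S.filter (fun f => w ∈ G.ends f)).card = 2 * W.card := by
    omega
  have hcnt_eq : ∀ f ∈ S, (W.filter (fun w => w ∈ G.ends f)).card = 2 := by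
    by_contra hcon
    push_neg at hcon
    obtain ⟨f, hf, hfne⟩ := hcon
    have hstrict : ∑ f ∈ S, (W.filter (fun w => w ∈ G.ends f)).card < ∑ _f ∈ S, 2 :=
      Finset.sum_lt_sum hcnt2 ⟨f, hf, by have := hcnt2 f hf; omega⟩
    rw [Finset.sum_const, smul_eq_mul, mul_comm] at hstrict
    omega
  have hdeg_eq : ∀ w ∈ W, (S.filter (fun f => w ∈ G.ends f)).card = 2 := by
    by_contra hcon
    push_neg at hcon
    obtain ⟨w, hw, hwne⟩ := hcon
    have hstrict : ∑ _w ∈ W, 2 < ∑ w ∈ W, (S.filter (fun f => w ∈ G.ends f)).card :=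
      Finset.sum_lt_sum hdeg2 ⟨w, hw, by have := hdeg2 w hw; omega⟩
    rw [Finset.sum_const, smul_eq_mul, mul_comm] at hstrict
    omega
  have hnoloop : ∀ f ∈ S, (pe G f).1 ≠ (pe G f).2 := by
    intro f hf heq
    have h2 := hcnt_eq f hf
    have hsub : W.filter (fun w => w ∈ G.ends f) ⊆ {(pe G f).1} := by
      intro w hw
      rw [Finset.mem_filter] at hw
      rw [Finset.mem_singleton]
      rcases (mem_ends_iff G).mp hw.2 with h | h
      · exact h
      · exact h.trans heq.symm
    have := Finset.card_le_card hsub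
    rw [Finset.card_singleton] at this
    omega
  obtain ⟨g0, hg0⟩ := cycle_nonempty G hC
  have hclaim : ∀ f, Linked G S g0 f → f ∈ C := by
    intro f hlink
    induction hlink with
    | refl => exact hg0
    | tail hab step ih =>
        rename_i b' c'
        obtain ⟨hb'S, hc'S, x, hxb, hxc⟩ := step
        by_contra hcC
        obtain ⟨d1, d2, hd1, hd2, hdne, hxd1, hxd2⟩ :=
          cyc_two_edges G hC (fun f' hf' => hnoloop f' (hCS hf')) ih hxb
        have hc1 : c' ≠ d1 := fun h => hcC (h ▸ hd1)
        have hc2 : c' ≠ d2 := fun h => hcC (h ▸ hd2)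
        have hsub : ({d1, d2, c'} : Finset Edge) ⊆ S.filter (fun f' => x ∈ G.ends f') := by
          intro y hy
          rw [Finset.mem_insert, Finset.mem_insert, Finset.mem_singleton] at hy
          rcases hy with rfl | rfl | rfl
          · exact Finset.mem_filter.mpr ⟨hCS hd1, hxd1⟩
          · exact Finset.mem_filter.mpr ⟨hCS hd2, hxd2⟩
          · exact Finset.mem_filter.mpr ⟨hc'S, hxc⟩
        have hcard3 : ({d1, d2, c'} : Finset Edge).card = 3 :=
          Finset.card_eq_three.mpr ⟨d1, d2, c', hdne, (Ne.symm hc1), (Ne.symm hc2), rfl⟩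
        have hxW : x ∈ W := mem_VS G hc'S hxc
        have h3 := Finset.card_le_card hsub
        rw [hcard3, hdeg_eq x hxW] at h3
        omega
  have hSC : S = C :=
    Finset.Subset.antisymm (fun f hf => hclaim f (hconn g0 (hCS hg0) f hf)) hCS
  rw [hSC]
  exact hC


lemma li_of_char {K : Finset Edge}
    (h : ∀ c : Edge → ℚ, (∀ f, c f ≠ 0 → f ∈ K) → ∑ f : Edge, c f • col G sgn f = 0 → c = 0) :
    LinearIndependent ℚ (fun j : ↑K => col G sgn ↑j) := by
  rw [Fintype.linearIndependent_iff]
  intro g hg j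
  set c : Edge → ℚ := fun f => if hf : f ∈ K then g ⟨f, hf⟩ else 0 with hc_def
  have hcg : ∀ j : ↑K, c ↑j = g j := fun j => dif_pos j.2
  have hsum : ∑ f : Edge, c f • col G sgn f = 0 := by
    have h1 : ∑ f : Edge, c f • col G sgn f = ∑ f ∈ K, c f • col G sgn f :=
      (Finset.sum_subset (Finset.subset_univ K)
        (fun f _ hf => by rw [hc_def]; dsimp only; rw [dif_neg hf, zero_smul])).symm
    rw [h1, ← Finset.sum_coe_sort K (fun f => c f • col G sgn f)]
    rw [show ∑ j : ↑K, c ↑j • col G sgn ↑j = ∑ j : ↑K, g j • col G sgn ↑j from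
      Finset.sum_congr rfl (fun j _ => by rw [hcg j])]
    exact hg
  have hsupp : ∀ f, c f ≠ 0 → f ∈ K := by
    intro f hf
    by_contra hfK
    exact hf (by rw [hc_def]; dsimp only; rw [dif_neg hfK])
  have := h c hsupp hsum
  rw [← hcg j, this, Pi.zero_apply]

/-- two distinct cycles in one component give a linear dependency over `ℚ`. -/
lemma two_cycles_dep {I : Finset Edge} {a : Edge} (ha : a ∈ I)
    {C₁ C₂ : Finset Edge} (h1 : C₁ ⊆ Component G I a) (h2 : C₂ ⊆ Component G I a)
    (hc1 : IsCycleSet G C₁) (hc2 : IsCycleSet G C₂) (hcc : C₁ ≠ C₂) :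
    ∃ c : Edge → ℚ, c ≠ 0 ∧ (∀ f, c f ≠ 0 → f ∈ I) ∧ ∑ f : Edge, c f • col G sgn f = 0 := by
  set K := Component G I a with hK_def
  have hKI : K ⊆ I := component_subset G
  have haK : a ∈ K := self_mem_component G ha
  set W := VS G K with hW_def
  set w0 : V := (pe G a).1 with hw0_def
  have hw0W : w0 ∈ W := p1_mem_VS G haK
  -- rank upper bound
  have hrank_le := finrank_range_psi2_le G hw0W
  -- kernel lower bound: the two indicator vectors are independent
  have hker_ge : 2 ≤ Module.finrank (ZMod 2) (LinearMap.ker (psi2 G K)) := by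
    obtain ⟨g, hg⟩ : ∃ g, (g ∈ C₁ ∧ g ∉ C₂) ∨ (g ∈ C₂ ∧ g ∉ C₁) := by
      by_contra hno
      push_neg at hno
      apply hcc
      ext f
      exact ⟨(hno f).1, (hno f).2⟩
    have key : ∀ A B : Finset Edge, A ⊆ K → B ⊆ K → IsCycleSet G A → IsCycleSet G B →
        g ∈ A → g ∉ B → 2 ≤ Module.finrank (ZMod 2) (LinearMap.ker (psi2 G K)) := by
      intro A B hAK hBK hA hB hgA hgB
      set xA : ↑K → ZMod 2 := fun j => if (j : Edge) ∈ A then 1 else 0 with hxA_def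
      set xB : ↑K → ZMod 2 := fun j => if (j : Edge) ∈ B then 1 else 0 with hxB_def
      have hxAk := indicator_mem_ker G K hAK hA
      have hxBk := indicator_mem_ker G K hBK hB
      set jg : ↑K := ⟨g, hAK hgA⟩ with hjg_def
      have hli : LinearIndependent (ZMod 2) ![xB, xA] := by
        rw [linearIndependent_fin2]
        constructor
        · intro h0
          have := congrFun h0 jg
          rw [Matrix.cons_val_one, Matrix.cons_val_zero] at this
          rw [hxA_def] at this
          simp only [if_pos (show (jg : Edge) ∈ A from hgA), Pi.zero_apply] at this
          exact one_ne_zero this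
        · intro t ht
          rw [Matrix.cons_val_one, Matrix.cons_val_zero, Matrix.cons_val_zero] at ht
          have h1 := congrFun ht jg
          rw [Pi.smul_apply, hxA_def, hxB_def] at h1
          simp only [if_pos (show (jg : Edge) ∈ A from hgA), if_neg (show (jg : Edge) ∉ B from hgB), smul_eq_mul, mul_one] at h1
          obtain ⟨fB, hfB⟩ := cycle_nonempty G hB
          have h2 := congrFun ht ⟨fB, hBK hfB⟩
          rw [Pi.smul_apply, hxA_def, hxB_def] at h2
          simp only [if_pos hfB, smul_eq_mul, h1, zero_mul] at h2
          exact one_ne_zero h2.symm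
      have hmem : ∀ i : Fin 2, (![xB, xA]) i ∈ LinearMap.ker (psi2 G K) := by
        intro i
        fin_cases i
        · exact hxBk
        · exact hxAk
      have := card_le_finrank_of_li (LinearMap.ker (psi2 G K)) hmem hli
      simpa using this
    rcases hg with ⟨hgA, hgB⟩ | ⟨hgA, hgB⟩
    · exact key C₁ C₂ h1 h2 hc1 hc2 hgA hgB
    · exact key C₂ C₁ h2 h1 hc2 hc1 hgA hgB
  -- rank lower bound via connectivity
  have hin_edge : ∀ f ∈ K, ∀ y z : V, y ∈ G.ends f → z ∈ G.ends f →
      (Pi.single y 1 + Pi.single z 1 : V → ZMod 2) ∈ LinearMap.range (psi2 G K) := by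
    intro f hf y z hy hz
    by_cases hyz : y = z
    · subst hyz
      rw [char2_add_self]
      exact Submodule.zero_mem _
    · rw [mem_ends_iff] at hy hz
      have hu : (Pi.single y 1 + Pi.single z 1 : V → ZMod 2) = ucol G f := by
        rcases hy with rfl | rfl <;> rcases hz with rfl | rfl
        · exact absurd rfl hyz
        · rfl
        · exact add_comm _ _
        · exact absurd rfl hyz
      rw [hu]
      exact ucol_mem_range G K hf
  have hwalk : ∀ f, Linked G K a f → ∀ z ∈ G.ends f,
      (Pi.single w0 1 + Pi.single z 1 : V → ZMod 2) ∈ LinearMap.range (psi2 G K) := by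
    intro f hlink
    induction hlink with
    | refl =>
        intro z hz
        exact hin_edge a haK w0 z (by rw [hw0_def, ends_eq G a]; exact Sym2.mem_mk_left _ _) hz
    | tail hab step ih =>
        rename_i b' c'
        obtain ⟨hb'K, hc'K, x, hxb, hxc⟩ := step
        intro z hz
        rw [char2_triangle w0 x z]
        exact Submodule.add_mem _ (ih x hxb) (hin_edge c' hc'K x z hxc hz)
  have hrank_ge : W.card - 1 ≤ Module.finrank (ZMod 2) (LinearMap.range (psi2 G K)) := by
    have hmem : ∀ w : ↑(W.erase w0),
        (Pi.single w0 1 + Pi.single (↑w : V) 1 : V → ZMod 2) ∈ LinearMap.range (psi2 G K) := by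
      intro w
      have hwW2 : (↑w : V) ∈ VS G K := Finset.mem_of_mem_erase w.2
      rw [VS, Finset.mem_union] at hwW2
      rcases hwW2 with h | h <;> obtain ⟨f, hf, hwf⟩ := Finset.mem_image.mp h
      · refine hwalk f (component_chain G ha ((mem_component G).mp hf).2) _ ?_
        rw [← hwf, ends_eq G f]
        exact Sym2.mem_mk_left _ _
      · refine hwalk f (component_chain G ha ((mem_component G).mp hf).2) _ ?_
        rw [← hwf, ends_eq G f]
        exact Sym2.mem_mk_right _ _
    have := card_le_finrank_of_li (LinearMap.range (psi2 G K)) hmem (star_li W w0)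
    rw [Fintype.card_coe, Finset.card_erase_of_mem hw0W] at this
    exact this
  have hrn := LinearMap.finrank_range_add_finrank_ker (psi2 G K)
  have hdom : Module.finrank (ZMod 2) (↑K → ZMod 2) = K.card := by
    rw [Module.finrank_pi]
    exact Fintype.card_coe K
  rw [hdom] at hrn
  have hWpos : 1 ≤ W.card := Finset.card_pos.mpr ⟨_, hw0W⟩
  have hKW : W.card + 1 ≤ K.card := by omega
  -- now the ℚ side
  by_contra hno
  push_neg at hno
  have hchar : ∀ c : Edge → ℚ, (∀ f, c f ≠ 0 → f ∈ K) → ∑ f : Edge, c f • col G sgn f = 0 →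
      c = 0 := by
    intro c hsupp hsum
    by_contra hc0
    exact (hno c hc0 (fun f hf => hKI (hsupp f hf)) hsum).elim
  have hli := li_of_char G sgn hchar
  set U : Submodule ℚ (V → ℚ) :=
    Submodule.span ℚ (↑(W.image (fun w => (Pi.single w 1 : V → ℚ))) : Set (V → ℚ)) with hU_def
  have hmemU : ∀ j : ↑K, col G sgn ↑j ∈ U := by
    intro j
    have hp1 : (Pi.single (pe G (↑j : Edge)).1 1 : V → ℚ) ∈ U := by
      refine Submodule.subset_span ?_
      exact_mod_cast Finset.mem_image.mpr ⟨_, mem_VS G j.2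
        (by rw [ends_eq G _]; exact Sym2.mem_mk_left _ _), rfl⟩
    have hp2 : (Pi.single (pe G (↑j : Edge)).2 1 : V → ℚ) ∈ U := by
      refine Submodule.subset_span ?_
      exact_mod_cast Finset.mem_image.mpr ⟨_, mem_VS G j.2
        (by rw [ends_eq G _]; exact Sym2.mem_mk_right _ _), rfl⟩
    exact Submodule.add_mem _ hp1 (Submodule.smul_mem _ _ hp2)
  have hcardK := card_le_finrank_of_li U hmemU hli
  rw [Fintype.card_coe] at hcardK
  have hUle : Module.finrank ℚ U ≤ W.card :=
    (finrank_span_finset_le_card _).trans Finset.card_image_le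
  omega


lemma false_of_balanced {I : Finset Edge} (hI : SgnIndep G sgn I) {C : Finset Edge}
    (hC : IsCycleSet G C) (hb : BalancedCycle sgn C) (hCI : C ⊆ I) : False := by
  obtain ⟨e0, he0⟩ := cycle_nonempty G hC
  have he0I : e0 ∈ I := hCI he0
  have hcomp : C ⊆ Component G I e0 :=
    cycle_subset_component G hC hCI he0 (self_mem_component G he0I)
  rcases hI e0 he0I with h | ⟨-, h2⟩
  · exact h C hcomp hC
  · exact h2 C hcomp hC hb

/-- Main lemma: if `I` is `SgnIndep` then its columns admit no linear dependency. -/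
lemma sgnIndep_no_dep {I : Finset Edge} (hI : SgnIndep G sgn I) :
    ∀ c : Edge → ℚ, (∀ f, c f ≠ 0 → f ∈ I) → ∑ f : Edge, c f • col G sgn f = 0 → c = 0 := by
  suffices h : ∀ N, ∀ c : Edge → ℚ, (Finset.univ.filter (fun f => c f ≠ 0)).card ≤ N →
      (∀ f, c f ≠ 0 → f ∈ I) → ∑ f : Edge, c f • col G sgn f = 0 → c = 0 by
    intro c
    exact h _ c le_rfl
  intro N
  induction N with
  | zero =>
      intro c hcard _ _
      funext f
      by_contra hf
      have : f ∈ Finset.univ.filter (fun f => c f ≠ 0) :=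
        Finset.mem_filter.mpr ⟨Finset.mem_univ f, hf⟩
      rw [Finset.card_eq_zero.mp (Nat.le_zero.mp hcard)] at this
      exact absurd this (Finset.notMem_empty f)
  | succ N ihN =>
      intro c hcard hsupp hsum
      by_cases hc0 : c = 0
      · exact hc0
      set S := Finset.univ.filter (fun f => c f ≠ 0) with hS_def
      have hmemS : ∀ f, f ∈ S ↔ c f ≠ 0 := by
        intro f; rw [hS_def, Finset.mem_filter]; simp
      have hSne : S.Nonempty := by
        obtain ⟨f, hf⟩ := Function.ne_iff.mp hc0
        exact ⟨f, (hmemS f).mpr (by simpa using hf)⟩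
      have hSI : S ⊆ I := fun f hf => hsupp f ((hmemS f).mp hf)
      have hnoploop : ∀ p ∈ S, (pe G p).1 = (pe G p).2 → sgn p = true := by
        intro p hp hpp
        by_contra hsg
        have hsgf : sgn p = false := by
          cases hsgn : sgn p
          · rfl
          · exact absurd hsgn hsg
        refine false_of_balanced G sgn hI (loop_cycle G (a := (pe G p).1) ?_) ?_
          (Finset.singleton_subset_iff.mpr (hSI hp))
        · rw [ends_eq G p, hpp]
        · unfold BalancedCycle
          rw [Finset.filter_singleton]
          simp [hsgf]
      have hdeg : ∀ w : V, ∀ f, f ∈ S → w ∈ G.ends f → ∃ g ∈ S, g ≠ f ∧ w ∈ G.ends g := by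
        intro w f hf hw
        by_contra hno
        push_neg at hno
        have hw0 := congrFun hsum w
        rw [Finset.sum_apply, Pi.zero_apply] at hw0
        rw [Finset.sum_eq_single f (fun g _ hgf => ?_)
          (fun hf' => absurd (Finset.mem_univ f) hf')] at hw0
        · have hcol : col G sgn f w ≠ 0 := by
            refine col_apply_of_mem G sgn hw ?_
            by_cases hl : (pe G f).1 = (pe G f).2
            · exact Or.inl (hnoploop f hf hl)
            · exact Or.inr hl
          rw [Pi.smul_apply, smul_eq_mul] at hw0
          exact ((hmemS f).mp hf) ((mul_eq_zero.mp hw0).resolve_right hcol)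
        · by_cases hg0 : c g = 0
          · rw [Pi.smul_apply, hg0, zero_smul]
          · have hgS : g ∈ S := (hmemS g).mpr hg0
            by_cases hcw : col G sgn g w = 0
            · rw [Pi.smul_apply, hcw, smul_zero]
            · exact absurd (col_apply_ne G sgn hcw) (hno g hgS hgf)
      by_cases hconn : ∀ f ∈ S, ∀ g ∈ S, g ∈ Component G S f
      · obtain ⟨C₁, hC₁S, hC₁⟩ := exists_cycle_of_mindeg G hSne hdeg
        obtain ⟨e0, he0⟩ := cycle_nonempty G hC₁
        have he0S : e0 ∈ S := hC₁S he0
        have he0I : e0 ∈ I := hSI he0S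
        have hC₁K : C₁ ⊆ Component G I e0 :=
          cycle_subset_component G hC₁ (hC₁S.trans hSI) he0 (self_mem_component G he0I)
        rcases hI e0 he0I with hnone | ⟨⟨Cu, hCu, hCuq⟩, hunbal⟩
        · exact absurd hC₁ (hnone C₁ hC₁K)
        have hsubcomp : ∀ C', C' ⊆ S → IsCycleSet G C' → C' ⊆ Component G I e0 := by
          intro C' hC'S hC'
          obtain ⟨f', hf'⟩ := cycle_nonempty G hC'
          have hf'c : f' ∈ Component G S e0 := hconn e0 he0S f' (hC'S hf')
          have hf'c2 : f' ∈ Component G I e0 := by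
            rw [mem_component G] at hf'c ⊢
            exact ⟨hSI hf'c.1, linked_mono G hSI hf'c.2⟩
          exact cycle_subset_component G hC' (hC'S.trans hSI) hf' hf'c2
        have huniqS : ∀ Ca, Ca ⊆ S → IsCycleSet G Ca → ∀ Cb, Cb ⊆ S → IsCycleSet G Cb →
            Ca = Cb := by
          intro Ca hCaS hCa Cb hCbS hCb
          have h1 : Ca = Cu := hCuq Ca ⟨hsubcomp Ca hCaS hCa, hCa⟩
          have h2 : Cb = Cu := hCuq Cb ⟨hsubcomp Cb hCbS hCb, hCb⟩
          rw [h1, h2]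
        have hconn' : ∀ f ∈ S, ∀ g ∈ S, Linked G S f g := by
          intro f hf g hg
          exact ((mem_component G).mp (hconn f hf g hg)).2
        have hScyc : IsCycleSet G S := struct G hSne hdeg hconn' huniqS
        have hSunbal : ¬ BalancedCycle sgn S :=
          hunbal S (hsubcomp S Finset.Subset.rfl hScyc) hScyc
        exact unbal_cycle_indep G sgn hScyc hSunbal c (fun f hf => (hmemS f).mpr hf) hsum
      · push_neg at hconn
        obtain ⟨f, hf, g, hg, hgnc⟩ := hconn
        set c' : Edge → ℚ := fun e => if e ∈ Component G S f then c e else 0 with hc'_def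
        have hker' : ∑ e : Edge, c' e • col G sgn e = 0 := by
          funext w
          rw [Finset.sum_apply, Pi.zero_apply]
          by_cases hA : ∀ e ∈ S, w ∈ G.ends e → e ∈ Component G S f
          · have hterm : ∀ e, (c' e • col G sgn e) w = (c e • col G sgn e) w := by
              intro e
              by_cases heT : e ∈ Component G S f
              · rw [hc'_def]; dsimp only; rw [if_pos heT]
              · rw [hc'_def]; dsimp only; rw [if_neg heT, zero_smul]
                by_cases hce : c e = 0
                · rw [Pi.smul_apply, hce, zero_smul, Pi.zero_apply]
                · by_cases hcw : col G sgn e w = 0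
                  · rw [Pi.smul_apply, hcw, smul_zero, Pi.zero_apply]
                  · exact absurd (hA e ((hmemS e).mpr hce) (col_apply_ne G sgn hcw)) heT
            rw [Finset.sum_congr rfl (fun e _ => hterm e)]
            have := congrFun hsum w
            rw [Finset.sum_apply, Pi.zero_apply] at this
            exact this
          · push_neg at hA
            obtain ⟨a', ha'S, ha'w, ha'nT⟩ := hA
            refine Finset.sum_eq_zero (fun e _ => ?_)
            by_cases heT : e ∈ Component G S f
            · by_cases hcw : col G sgn e w = 0
              · rw [Pi.smul_apply, hcw, smul_zero]
              · exact absurd (component_closed G heT ha'S (col_apply_ne G sgn hcw) ha'w) ha'nT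
            · rw [hc'_def]; dsimp only; rw [if_neg heT, zero_smul, Pi.zero_apply]
        have hsupp' : ∀ e, c' e ≠ 0 → e ∈ I := by
          intro e he
          rw [hc'_def] at he
          dsimp only at he
          by_cases heT : e ∈ Component G S f
          · rw [if_pos heT] at he
            exact hsupp e he
          · rw [if_neg heT] at he
            exact absurd rfl he
        have hcard' : (Finset.univ.filter (fun e => c' e ≠ 0)).card ≤ N := by
          have hsub : Finset.univ.filter (fun e => c' e ≠ 0) ⊆ S.erase g := by
            intro e he
            rw [Finset.mem_filter] at he
            have he2 := he.2
            rw [hc'_def] at he2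
            dsimp only at he2
            by_cases heT : e ∈ Component G S f
            · rw [if_pos heT] at he2
              refine Finset.mem_erase.mpr ⟨fun hc => ?_, (hmemS e).mpr he2⟩
              subst hc
              exact hgnc heT
            · rw [if_neg heT] at he2
              exact absurd rfl he2
          have h1 := Finset.card_le_card hsub
          have h2 : (S.erase g).card = S.card - 1 := Finset.card_erase_of_mem hg
          have h3 : S.card ≤ N + 1 := hcard
          have h4 : 1 ≤ S.card := Finset.card_pos.mpr ⟨g, hg⟩
          omega
        have hc'0 := ihN c' hcard' hsupp' hker'
        exfalso
        have := congrFun hc'0 f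
        rw [hc'_def] at this
        dsimp only at this
        rw [if_pos (self_mem_component G hf)] at this
        exact ((hmemS f).mp hf) this

/-- if `I` is not `SgnIndep` then its columns admit a linear dependency. -/
lemma notSgn_dep {I : Finset Edge} (h : ¬ SgnIndep G sgn I) :
    ∃ c : Edge → ℚ, c ≠ 0 ∧ (∀ f, c f ≠ 0 → f ∈ I) ∧ ∑ f : Edge, c f • col G sgn f = 0 := by
  obtain ⟨e, heI, hD⟩ : ∃ e ∈ I, ¬ ((∀ C ⊆ Component G I e, ¬ IsCycleSet G C) ∨
      ((∃! C, C ⊆ Component G I e ∧ IsCycleSet G C) ∧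
        ∀ C ⊆ Component G I e, IsCycleSet G C → ¬ BalancedCycle sgn C)) := by
    by_contra hno
    push_neg at hno
    exact h (fun e he => hno e he)
  obtain ⟨h1', h2⟩ := not_or.mp hD
  obtain ⟨C₁, hC₁c, hC₁⟩ : ∃ C₁, C₁ ⊆ Component G I e ∧ IsCycleSet G C₁ := by
    by_contra hno
    push_neg at hno
    exact h1' (fun C hC => hno C hC)
  have hcompI : Component G I e ⊆ I := component_subset G
  by_cases hbal : ∃ C, C ⊆ Component G I e ∧ IsCycleSet G C ∧ BalancedCycle sgn C
  · obtain ⟨C, hCc, hC, hb⟩ := hbal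
    obtain ⟨c, hc0, hcsupp, hcker⟩ := balanced_cycle_dep G sgn hC hb
    exact ⟨c, hc0, fun f hf => hcompI (hCc (hcsupp f hf)), hcker⟩
  · push_neg at hbal
    have hnu : ¬ ∃! C, C ⊆ Component G I e ∧ IsCycleSet G C := by
      intro hex
      exact h2 ⟨hex, fun C hc hcyc => hbal C hc hcyc⟩
    have hC2 : ∃ C₂, (C₂ ⊆ Component G I e ∧ IsCycleSet G C₂) ∧ C₂ ≠ C₁ := by
      by_contra hno
      push_neg at hno
      exact hnu ⟨C₁, ⟨hC₁c, hC₁⟩, fun y hy => hno y hy⟩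
    obtain ⟨C₂, ⟨hC₂c, hC₂⟩, hne⟩ := hC2
    exact two_cycles_dep G sgn heI hC₂c hC₁c hC₂ hC₁ (by exact fun hcc => hne hcc)


/-- independence of the columns indexed by a set of edges. -/
def ColIndep (X : Set Edge) : Prop :=
  ∀ c : Edge → ℚ, (∀ f, c f ≠ 0 → f ∈ X) → ∑ f : Edge, c f • col G sgn f = 0 → c = 0

lemma colIndep_empty : ColIndep G sgn (∅ : Set Edge) := by
  intro c hsupp _
  funext f
  by_contra hf
  exact absurd (hsupp f hf) (Set.notMem_empty f)

lemma colIndep_mono {X Y : Set Edge} (hY : ColIndep G sgn Y) (hXY : X ⊆ Y) :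
    ColIndep G sgn X :=
  fun c hsupp hsum => hY c (fun f hf => hXY (hsupp f hf)) hsum

lemma colIndep_insert {X : Set Edge} (hX : ColIndep G sgn X) {e : Edge}
    (hnot : ¬ ColIndep G sgn (insert e X)) :
    col G sgn e ∈ Submodule.span ℚ (col G sgn '' X) := by
  unfold ColIndep at hnot
  push_neg at hnot
  obtain ⟨c, hsupp, hsum, hc0⟩ := hnot
  by_cases hce : c e = 0
  · exfalso
    apply hc0
    refine hX c (fun f hf => ?_) hsum
    rcases hsupp f hf with rfl | hfX
    · exact absurd hce hf
    · exact hfX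
  · have hsplit : c e • col G sgn e + ∑ f ∈ Finset.univ.erase e, c f • col G sgn f
        = ∑ f : Edge, c f • col G sgn f :=
      Finset.add_sum_erase Finset.univ (fun f => c f • col G sgn f) (Finset.mem_univ e)
    have hsum_mem : ∑ f ∈ Finset.univ.erase e, c f • col G sgn f
        ∈ Submodule.span ℚ (col G sgn '' X) := by
      refine Submodule.sum_mem _ (fun f hf => ?_)
      by_cases hcf : c f = 0
      · rw [hcf, zero_smul]
        exact Submodule.zero_mem _
      · refine Submodule.smul_mem _ _ (Submodule.subset_span ?_)
        rcases hsupp f hcf with rfl | hfX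
        · exact absurd rfl (Finset.mem_erase.mp hf).1
        · exact Set.mem_image_of_mem _ hfX
    have hee : c e • col G sgn e = -(∑ f ∈ Finset.univ.erase e, c f • col G sgn f) := by
      rw [hsum] at hsplit
      linear_combination (norm := module) hsplit
    have : col G sgn e = (c e)⁻¹ • (c e • col G sgn e) := (inv_smul_smul₀ hce _).symm
    rw [this, hee]
    exact Submodule.smul_mem _ _ (Submodule.neg_mem _ hsum_mem)

lemma colIndep_aug {X Y : Set Edge} (hX : ColIndep G sgn X) (hY : ColIndep G sgn Y)
    (hcard : X.ncard < Y.ncard) : ∃ e ∈ Y, e ∉ X ∧ ColIndep G sgn (insert e X) := by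
  by_contra hno
  push_neg at hno
  set U := Submodule.span ℚ (col G sgn '' X) with hU_def
  have hYU : ∀ e ∈ Y, col G sgn e ∈ U := by
    intro e he
    by_cases heX : e ∈ X
    · exact Submodule.subset_span (Set.mem_image_of_mem _ heX)
    · exact colIndep_insert G sgn hX (hno e he heX)
  have hXfin : X.Finite := Set.toFinite X
  have hYfin : Y.Finite := Set.toFinite Y
  have hliY : LinearIndependent ℚ (fun j : ↑hYfin.toFinset => col G sgn ↑j) :=
    li_of_char G sgn
      (fun c hsupp hsum => hY c (fun f hf => hYfin.mem_toFinset.mp (hsupp f hf)) hsum)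
  have hmemU : ∀ j : ↑hYfin.toFinset, col G sgn ↑j ∈ U :=
    fun j => hYU _ (hYfin.mem_toFinset.mp j.2)
  have hcardY := card_le_finrank_of_li U hmemU hliY
  rw [Fintype.card_coe] at hcardY
  have hYcard : hYfin.toFinset.card = Y.ncard := (Set.ncard_eq_toFinset_card _ hYfin).symm
  have hUI : U = Submodule.span ℚ (↑(hXfin.toFinset.image (col G sgn)) : Set (V → ℚ)) := by
    rw [hU_def]
    congr 1
    rw [Finset.coe_image, Set.Finite.coe_toFinset]
  have hUle : Module.finrank ℚ U ≤ X.ncard := by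
    rw [hUI]
    refine (finrank_span_finset_le_card _).trans ?_
    rw [Set.ncard_eq_toFinset_card _ hXfin]
    exact Finset.card_image_le
  omega

theorem signed_graph_matroid' :
    ∃ M : Matroid Edge, M.E = Set.univ ∧
      (∀ I : Finset Edge, M.Indep ↑I ↔ SgnIndep G sgn I) ∧
      ∀ B : Finset Edge, M.IsBase ↑B → B.card ≤ Fintype.card V := by
  refine ⟨(IndepMatroid.ofFinite Set.finite_univ (ColIndep G sgn)
    (colIndep_empty G sgn) (fun X Y hY hXY => colIndep_mono G sgn hY hXY)
    (fun X Y hX hY h => colIndep_aug G sgn hX hY h)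
    (fun X _ => Set.subset_univ X)).matroid, ?_, ?_, ?_⟩
  · rw [IndepMatroid.matroid_E]
    rfl
  · intro I
    rw [IndepMatroid.matroid_indep_iff]
    show ColIndep G sgn ↑I ↔ SgnIndep G sgn I
    constructor
    · intro h
      by_contra hn
      obtain ⟨c, hc0, hcsupp, hcker⟩ := notSgn_dep G sgn hn
      exact hc0 (h c (fun f hf => Finset.mem_coe.mpr (hcsupp f hf)) hcker)
    · intro h c hsupp hsum
      exact sgnIndep_no_dep G sgn h c (fun f hf => Finset.mem_coe.mp (hsupp f hf)) hsum
  · intro B hB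
    have hind : ColIndep G sgn ↑B := by
      have h1 := hB.indep
      rw [IndepMatroid.matroid_indep_iff] at h1
      exact h1
    have hli := li_of_char G sgn
      (fun c hsupp hsum => hind c (fun f hf => Finset.mem_coe.mpr (hsupp f hf)) hsum)
    have hcard := hli.fintype_card_le_finrank
    rw [Fintype.card_coe, Module.finrank_pi] at hcard
    exact hcard

end SGH

/-- Zaslavsky: in a signed graph, the edge sets all of whose
components are trees or unicyclic with unbalanced unique cycle are the
independent sets of a matroid, and every base has at most `|V|` elements. -/
theorem signed_graph_matroid {V Edge : Type} [Fintype V] [Fintype Edge]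
    [DecidableEq Edge] (G : Multigraph V Edge) (sgn : Edge → Bool) :
    ∃ M : Matroid Edge, M.E = Set.univ ∧
      (∀ I : Finset Edge, M.Indep ↑I ↔ SgnIndep G sgn I) ∧
      ∀ B : Finset Edge, M.IsBase ↑B → B.card ≤ Fintype.card V :=
  signed_graph_matroid' G sgn
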